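/- Every locally closed linear formula (with respect to a continuous Petri net N) is bi-invariant: if φ = φ₁ ∨ ⋯ ∨ φₙ is locally closed with respect to N, then its solution relation sol(φ) ⊆ (ℝ≥0)^P × (ℝ≥0)^P is forward invariant and backward invariant. -/

import Mathlib

/-- A continuous Petri net `N = (P, T, F)` with places `P`, transitions `T`,
and flow matrices `F₋, F₊ : P × T → ℕ`. -/
structure PetriNet (P T : Type*) where
  Fminus : P → T → ℕ
  Fplus : P → T → ℕ

namespace PetriNet

variable {P T : Type*}

/-- `pre(t)`: the column of `F₋` associated to transition `t`, as a real vector. -/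
def pre (N : PetriNet P T) (t : T) : P → ℝ := fun p => (N.Fminus p t : ℝ)

/-- `post(t)`: the column of `F₊` associated to transition `t`, as a real vector. -/
def post (N : PetriNet P T) (t : T) : P → ℝ := fun p => (N.Fplus p t : ℝ)

/-- The transpose net `N^T := (P, T, (F₊, F₋))`. -/
def transpose (N : PetriNet P T) : PetriNet P T := ⟨N.Fplus, N.Fminus⟩

/-- `m →(αt) m'` : transition `t` is `α`-fired (α > 0) from `m`, leading to `m'`. -/
def fire (N : PetriNet P T) (t : T) (α : ℝ) (m m' : P → ℝ) : Prop :=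
  0 < α ∧ (∀ p, α * N.pre t p ≤ m p) ∧
    ∀ p, m' p = m p + α * (N.post t p - N.pre t p)

/-- Firing a sequence `σ = α₁t₁ ⋯ αₙtₙ` (a list of (amount, transition) pairs)
from `m` to `m'`. -/
def fireSeq (N : PetriNet P T) : List (ℝ × T) → (P → ℝ) → (P → ℝ) → Prop
  | [], m, m' => m = m'
  | (α, t) :: σ, m, m' => ∃ m₁, N.fire t α m m₁ ∧ N.fireSeq σ m₁ m'

/-- The support of a firing sequence: the set of transitions occurring in it. -/
def seqSupport (σ : List (ℝ × T)) : Set T := {t | ∃ α : ℝ, (α, t) ∈ σ}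

end PetriNet

namespace PetriNet

variable {P T : Type*}

/-- `m → m'` : some transition can be `α`-fired from `m`, leading to `m'`. -/
def step (N : PetriNet P T) (m m' : P → ℝ) : Prop :=
  ∃ (t : T) (α : ℝ), N.fire t α m m'

end PetriNet

open PetriNet

/-- An atomic proposition `a·m + a'·m' ∼ b` over pairs of markings, with `∼ ∈ {≤, <}`
(`strict = true` means `<`). -/
structure Atom (P : Type*) where
  a : P → ℝ
  a' : P → ℝ
  b : ℝ
  strict : Bool

namespace Atom

variable {P : Type*} [Fintype P]

/-- Solutions of an atomic proposition, as a set of pairs of markings. -/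
def sol (ψ : Atom P) : Set ((P → ℝ) × (P → ℝ)) :=
  {mm | 0 ≤ mm.1 ∧ 0 ≤ mm.2 ∧
    (if ψ.strict then (∑ p, ψ.a p * mm.1 p) + (∑ p, ψ.a' p * mm.2 p) < ψ.b
      else (∑ p, ψ.a p * mm.1 p) + (∑ p, ψ.a' p * mm.2 p) ≤ ψ.b)}

/-- The transpose of an atomic proposition swaps the two marking arguments. -/
def transpose (ψ : Atom P) : Atom P := ⟨ψ.a', ψ.a, ψ.b, ψ.strict⟩

/-- `ψ ⇝_t ψ'` : `ψ` `t`-implies `ψ'`. -/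
def timplies {T : Type*} (N : PetriNet P T) (t : T) (ψ ψ' : Atom P) : Prop :=
  ∀ (m m' m'' : P → ℝ) (α : ℝ),
    (m, m') ∈ ψ.sol → N.fire t α m' m'' → (m, m'') ∈ ψ'.sol

end Atom

/-- A clause (finite conjunction of atomic propositions) `t`-implies another clause. -/
def Clause.timplies {P T : Type*} [Fintype P] (N : PetriNet P T) (t : T)
    (c c' : List (Atom P)) : Prop :=
  ∀ ψ' ∈ c', ∃ ψ ∈ c, Atom.timplies N t ψ ψ'

/-- Solutions of a DNF formula (disjunction of clauses). -/
def Formula.sol {P : Type*} [Fintype P] (φ : List (List (Atom P))) :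
    Set ((P → ℝ) × (P → ℝ)) :=
  {mm | ∃ c ∈ φ, ∀ ψ ∈ c, mm ∈ ψ.sol}

/-- `φ` is locally closed w.r.t. `N`: it is a DNF formula of homogeneous atomic
propositions, each clause `t`-implies some clause for each transition `t`, and
likewise for the transposed clauses in the transpose net. -/
def LocallyClosed {P T : Type*} [Fintype P] (N : PetriNet P T)
    (φ : List (List (Atom P))) : Prop :=
  (∀ c ∈ φ, ∀ ψ ∈ c, ψ.b = 0) ∧
  (∀ t : T, ∀ c ∈ φ, ∃ c' ∈ φ, Clause.timplies N t c c') ∧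
  (∀ t : T, ∀ c ∈ φ, ∃ c' ∈ φ,
    Clause.timplies N.transpose t (c.map Atom.transpose) (c'.map Atom.transpose))

/-- Locally closed formulas are bi-invariant: their solution relation is both
forward invariant and backward invariant. -/

lemma fire_transpose {P T : Type*} (N : PetriNet P T) (t : T) (α : ℝ)
    (m m' : P → ℝ) (hf : N.fire t α m m') : N.transpose.fire t α m' m := by
  obtain ⟨hα, hpre, heq⟩ := hf
  refine ⟨hα, fun p => ?_, fun p => ?_⟩
  · have h1 := hpre p
    have h2 := heq p
    simp only [PetriNet.transpose, PetriNet.pre, PetriNet.post] at *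
    linarith
  · have h2 := heq p
    simp only [PetriNet.transpose, PetriNet.pre, PetriNet.post] at *
    linarith

lemma sol_transpose {P : Type*} [Fintype P] (ψ : Atom P) (x y : P → ℝ) :
    (x, y) ∈ ψ.transpose.sol ↔ (y, x) ∈ ψ.sol := by
  simp only [Atom.sol, Atom.transpose, Set.mem_setOf_eq]
  constructor <;> rintro ⟨h1, h2, h3⟩ <;> exact ⟨h2, h1, by rw [add_comm]; exact h3⟩

theorem locallyClosed_biinvariant
    {P T : Type*} [Fintype P]
    (N : PetriNet P T) (φ : List (List (Atom P)))
    (h : LocallyClosed N φ) :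
    (∀ m m' m'' : P → ℝ,
      (m, m') ∈ Formula.sol φ → N.step m' m'' → (m, m'') ∈ Formula.sol φ) ∧
    (∀ m m' m'' : P → ℝ,
      (m', m'') ∈ Formula.sol φ → N.step m m' → (m, m'') ∈ Formula.sol φ) := by
  obtain ⟨-, hfwd, hbwd⟩ := h
  constructor
  · rintro m m' m'' ⟨c, hc, hsat⟩ ⟨t, α, hf⟩
    obtain ⟨c', hc', himp⟩ := hfwd t c hc
    refine ⟨c', hc', fun ψ' hψ' => ?_⟩
    obtain ⟨ψ, hψ, ht⟩ := himp ψ' hψ'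
    exact ht m m' m'' α (hsat ψ hψ) hf
  · rintro m m' m'' ⟨c, hc, hsat⟩ ⟨t, α, hf⟩
    obtain ⟨c', hc', himp⟩ := hbwd t c hc
    refine ⟨c', hc', fun ψ' hψ' => ?_⟩
    obtain ⟨ψT, hψT, ht⟩ := himp ψ'.transpose (List.mem_map_of_mem hψ')
    obtain ⟨ψ, hψ, rfl⟩ := List.mem_map.mp hψT
    have : (m'', m) ∈ (ψ'.transpose).sol :=
      ht m'' m' m α ((sol_transpose ψ m'' m').mpr (hsat ψ hψ))
        (fire_transpose N t α m m' hf)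
    exact (sol_transpose ψ' m'' m).mp this
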